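/- Let n ≥ 2 and δ : Sp(2n,ℤ) → ℤ^{2n} a 1-cocycle that vanishes on all block-diagonal elements diag(A,(Aᵗ)⁻¹) for A ∈ GL(n,ℤ). Write δ([[I,B],[0,I]]) = (δ₁(B), δ₂(B)) for B symmetric. Then δ₂ : M_n(ℤ)^{sym} → ℤⁿ is a group homomorphism and δ₁(B+C) = δ₁(B) + δ₁(C) + B·δ₂(C); consequently B·δ₂(C) = C·δ₂(B) for all symmetric B, C, which forces δ₂ = 0. -/

import Mathlib

/-- The upper unitriangular symplectic matrix `[[I, B], [0, I]]`. -/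
def upperUni {n : ℕ} (B : Matrix (Fin n) (Fin n) ℤ) :
    Matrix (Fin n ⊕ Fin n) (Fin n ⊕ Fin n) ℤ :=
  Matrix.fromBlocks 1 B 0 1

/-- The block-diagonal symplectic matrix `diag(A, (Aᵗ)⁻¹)` for `A ∈ GL(n,ℤ)`. -/
def blockDiag {n : ℕ} (A : GL (Fin n) ℤ) :
    Matrix (Fin n ⊕ Fin n) (Fin n ⊕ Fin n) ℤ :=
  Matrix.fromBlocks (A : Matrix (Fin n) (Fin n) ℤ) 0 0
    (Matrix.transpose ((A⁻¹ : GL (Fin n) ℤ) : Matrix (Fin n) (Fin n) ℤ))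

lemma stdT {n : ℕ} (i j : Fin n) (c : ℤ) :
    Matrix.transpose (Matrix.single i j c) = Matrix.single j i c := by
  ext a b
  simp only [Matrix.transpose_apply, Matrix.single, Matrix.of_apply]
  by_cases h1 : j = a <;> by_cases h2 : i = b <;> simp [h1, h2, and_comm]

lemma upperUni_mem {n : ℕ} {B : Matrix (Fin n) (Fin n) ℤ} (hB : B.IsSymm) :
    upperUni B ∈ Matrix.symplecticGroup (Fin n) ℤ := by
  rw [SymplecticGroup.mem_iff, Matrix.J]
  simp [upperUni, Matrix.fromBlocks_multiply, Matrix.fromBlocks_transpose, hB.eq]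

lemma upperUni_mul {n : ℕ} (B C : Matrix (Fin n) (Fin n) ℤ) :
    upperUni B * upperUni C = upperUni (B + C) := by
  simp [upperUni, Matrix.fromBlocks_multiply, add_comm]

lemma mv_inr {n : ℕ} (B : Matrix (Fin n) (Fin n) ℤ) (v : (Fin n ⊕ Fin n) → ℤ) (i : Fin n) :
    (upperUni B).mulVec v (Sum.inr i) = v (Sum.inr i) := by
  simp [upperUni, Matrix.mulVec, dotProduct, Fintype.sum_sum_type,
    Matrix.one_apply]

lemma mv_inl {n : ℕ} (B : Matrix (Fin n) (Fin n) ℤ) (v : (Fin n ⊕ Fin n) → ℤ) (i : Fin n) :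
    (upperUni B).mulVec v (Sum.inl i) = v (Sum.inl i) + B.mulVec (fun j => v (Sum.inr j)) i := by
  simp [upperUni, Matrix.mulVec, dotProduct, Fintype.sum_sum_type,
    Matrix.one_apply]

/-- Analysis of a 1-cocycle on `Sp(2n,ℤ)` vanishing on the block-diagonal
subgroup: in the notation `δ(upperUni B) = (δ₁ B, δ₂ B)`, the map `δ₂` is
additive, `δ₁` is additive up to the correction term `B·δ₂(C)`, whence
`B·δ₂(C) = C·δ₂(B)` for all symmetric `B, C`, which forces `δ₂ = 0`. -/
theorem sp_cocycle_block_analysis {n : ℕ} (hn : 2 ≤ n)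
    (δ : Matrix (Fin n ⊕ Fin n) (Fin n ⊕ Fin n) ℤ → ((Fin n ⊕ Fin n) → ℤ))
    (hcoc : ∀ g h, g ∈ Matrix.symplecticGroup (Fin n) ℤ →
      h ∈ Matrix.symplecticGroup (Fin n) ℤ → δ (g * h) = δ g + g.mulVec (δ h))
    (hdiag : ∀ A : GL (Fin n) ℤ, δ (blockDiag A) = 0) :
    (∀ B C : Matrix (Fin n) (Fin n) ℤ, B.IsSymm → C.IsSymm →
      (fun i => δ (upperUni (B + C)) (Sum.inr i)) =
        (fun i => δ (upperUni B) (Sum.inr i)) + fun i => δ (upperUni C) (Sum.inr i)) ∧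
    (∀ B C : Matrix (Fin n) (Fin n) ℤ, B.IsSymm → C.IsSymm →
      (fun i => δ (upperUni (B + C)) (Sum.inl i)) =
        ((fun i => δ (upperUni B) (Sum.inl i)) + fun i => δ (upperUni C) (Sum.inl i)) +
          B.mulVec fun i => δ (upperUni C) (Sum.inr i)) ∧
    (∀ B C : Matrix (Fin n) (Fin n) ℤ, B.IsSymm → C.IsSymm →
      (B.mulVec fun i => δ (upperUni C) (Sum.inr i)) =
        C.mulVec fun i => δ (upperUni B) (Sum.inr i)) ∧
    (∀ B : Matrix (Fin n) (Fin n) ℤ, B.IsSymm →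
      (fun i => δ (upperUni B) (Sum.inr i)) = (0 : Fin n → ℤ)) := by
  have key : ∀ B C : Matrix (Fin n) (Fin n) ℤ, B.IsSymm → C.IsSymm →
      δ (upperUni (B + C)) = δ (upperUni B) + (upperUni B).mulVec (δ (upperUni C)) := by
    intro B C hB hC
    rw [← upperUni_mul]
    exact hcoc _ _ (upperUni_mem hB) (upperUni_mem hC)
  have h2 : ∀ B C : Matrix (Fin n) (Fin n) ℤ, B.IsSymm → C.IsSymm →
      (fun i => δ (upperUni (B + C)) (Sum.inr i)) =
        (fun i => δ (upperUni B) (Sum.inr i)) + fun i => δ (upperUni C) (Sum.inr i) := by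
    intro B C hB hC
    funext i
    simp [key B C hB hC, mv_inr]
  have h1 : ∀ B C : Matrix (Fin n) (Fin n) ℤ, B.IsSymm → C.IsSymm →
      (fun i => δ (upperUni (B + C)) (Sum.inl i)) =
        ((fun i => δ (upperUni B) (Sum.inl i)) + fun i => δ (upperUni C) (Sum.inl i)) +
          B.mulVec fun i => δ (upperUni C) (Sum.inr i) := by
    intro B C hB hC
    funext i
    simp [key B C hB hC, mv_inl]
    ring
  have h3 : ∀ B C : Matrix (Fin n) (Fin n) ℤ, B.IsSymm → C.IsSymm →
      (B.mulVec fun i => δ (upperUni C) (Sum.inr i)) =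
        C.mulVec fun i => δ (upperUni B) (Sum.inr i) := by
    intro B C hB hC
    have e1 := h1 B C hB hC
    have e2 := h1 C B hC hB
    rw [add_comm C B] at e2
    have e := e1.symm.trans e2
    funext i
    have := congrFun e i
    simp only [Pi.add_apply] at this
    linarith
  have hv : ∀ C : Matrix (Fin n) (Fin n) ℤ, C.IsSymm →
      (fun i => δ (upperUni C) (Sum.inr i)) =
        C.mulVec (fun i => δ (upperUni 1) (Sum.inr i)) := by
    intro C hC
    have := h3 1 C Matrix.isSymm_one hC
    simpa [Matrix.one_mulVec] using this
  have hv0 : (fun i => δ (upperUni (1 : Matrix (Fin n) (Fin n) ℤ)) (Sum.inr i)) = 0 := by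
    haveI : Nontrivial (Fin n) := Fin.nontrivial_iff_two_le.mpr hn
    funext i
    obtain ⟨j, hj⟩ := exists_ne i
    set v := fun i => δ (upperUni (1 : Matrix (Fin n) (Fin n) ℤ)) (Sum.inr i) with hvdef
    set C := Matrix.single i i (1 : ℤ) with hCdef
    set B := Matrix.single i j (1 : ℤ) + Matrix.single j i 1 with hBdef
    have hCs : C.IsSymm := by
      unfold Matrix.IsSymm
      rw [hCdef, stdT]
    have hBs : B.IsSymm := by
      unfold Matrix.IsSymm
      rw [hBdef, Matrix.transpose_add, stdT, stdT, add_comm]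
    have h := h3 B C hBs hCs
    rw [hv B hBs, hv C hCs] at h
    have h' := congrFun h j
    simp [hBdef, hCdef, Matrix.add_mulVec, Matrix.single_mulVec,
      Function.update_apply, hj, Ne.symm hj] at h'
    exact h'
  refine ⟨h2, h1, h3, ?_⟩
  intro B hB
  rw [hv B hB, hv0, Matrix.mulVec_zero]
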